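/- arXiv:2201.05361 — 2 statements merged into one kernel-verified Lean document; each statement's English description precedes it below -/
import Mathlib

section
/- Let C be a rigid monoidal category and X ∈ C an object such that the functor (- ⊗ X) : C → C is an equivalence of categories. Then X is invertible, i.e. its left evaluation and coevaluation morphisms are isomorphisms. -/
open CategoryTheory MonoidalCategory

/-- In a rigid monoidal category, if `(- ⊗ X)` is an equivalence of categories, then `X` is
invertible: its (left) evaluation and coevaluation morphisms are isomorphisms. -/
theorem invertible_of_tensorRight_equivalence {C : Type*} [Category C] [MonoidalCategory C]
    [RigidCategory C] (X : C) (h : (tensorRight X).IsEquivalence) :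
    IsIso (ε_ X Xᘁ) ∧ IsIso (η_ X Xᘁ) := by
  haveI : (tensorRight X).IsEquivalence := h
  haveI : (tensorRight (Xᘁ : C)).IsEquivalence :=
    (tensorRightAdjunction X Xᘁ).isEquivalence_right_of_isEquivalence_left
  haveI hu : IsIso ((tensorRightAdjunction X Xᘁ).unit.app (𝟙_ C)) := inferInstance
  haveI hc : IsIso ((tensorRightAdjunction X Xᘁ).counit.app (𝟙_ C)) := inferInstance
  constructor
  · have e : ε_ X Xᘁ = (λ_ _).inv ≫ (α_ _ _ _).inv ≫
        (tensorRightAdjunction X Xᘁ).counit.app (𝟙_ C) ≫ (ρ_ _).inv ≫ (λ_ _).hom := by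
      simp [tensorRightAdjunction, tensorRightHomEquiv, Adjunction.mkOfHomEquiv]
    rw [e]; infer_instance
  · have e : η_ X Xᘁ = (λ_ _).inv ≫ (ρ_ _).hom ≫
        (tensorRightAdjunction X Xᘁ).unit.app (𝟙_ C) ≫ (α_ _ _ _).hom ≫ (λ_ _).hom := by
      simp [tensorRightAdjunction, tensorRightHomEquiv, Adjunction.mkOfHomEquiv]
    rw [e]; infer_instance
end

section
/- If X is a symmetric object of the Drinfeld centre of a rigid monoidal category (σ_{X,Y}⁻¹ = σ_{Y,X} for all Y), then its left dual ∗X is symmetric as well: σ_{∗X,Y}⁻¹ = σ_{Y,∗X} for all Y in Z(C). Consequently the full subcategory of symmetric objects of Z(C) is rigid. -/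
open CategoryTheory MonoidalCategory

universe v u

variable {C : Type u} [Category.{v} C] [MonoidalCategory C]

/-- An object of the Drinfeld centre is symmetric if the braiding (half-braiding) with every
object of the centre is "trivial": `σ_{X,Y}⁻¹ = σ_{Y,X}`. -/
def IsSymmetricObj (X : Center C) : Prop :=
  ∀ Y : Center C, (β_ X Y).symm = β_ Y X

section Aux

open BraidedCategory

variable {D : Type*} [Category D] [MonoidalCategory D] [BraidedCategory D]

/-- Key computation: in a braided category, if `X` is transparent (double braiding with every
object trivial) and `(X, X')` is an exact pairing, then the double braiding of `X'` with any `Y`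
is trivial. -/
theorem transparent_dual_comp (X X' : D) [ExactPairing X X']
    (h : ∀ Y : D, (β_ X Y).inv = (β_ Y X).hom) (Y : D) :
    (β_ X' Y).hom ≫ (β_ Y X').hom = 𝟙 (X' ⊗ Y) := by
  apply (tensorLeftHomEquiv Y X X' (X' ⊗ Y)).injective
  dsimp [tensorLeftHomEquiv]
  simp only [MonoidalCategory.whiskerLeft_id, Category.comp_id]
  congr 1
  calc η_ X X' ▷ Y ≫ (α_ X X' Y).hom ≫ X ◁ ((β_ X' Y).hom ≫ (β_ Y X').hom)
      = η_ X X' ▷ Y ≫ ((β_ (X ⊗ X') Y).hom ≫ (α_ Y X X').inv ≫ (β_ X Y).inv ▷ X' ≫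
          (α_ X Y X').hom) ≫ X ◁ (β_ Y X').hom := by
        rw [braiding_tensor_left_hom]
        simp
    _ = (β_ (𝟙_ D) Y).hom ≫ Y ◁ η_ X X' ≫ ((α_ Y X X').inv ≫ (β_ Y X).hom ▷ X' ≫
          (α_ X Y X').hom ≫ X ◁ (β_ Y X').hom) := by
        simp only [Category.assoc]
        rw [braiding_naturality_left_assoc, h Y]
    _ = (β_ (𝟙_ D) Y).hom ≫ Y ◁ η_ X X' ≫ (β_ Y (X ⊗ X')).hom ≫ (α_ X X' Y).hom := by
        rw [braiding_tensor_right_hom]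
        simp
    _ = (β_ (𝟙_ D) Y).hom ≫ (β_ Y (𝟙_ D)).hom ≫ η_ X X' ▷ Y ≫ (α_ X X' Y).hom := by
        rw [braiding_naturality_right_assoc]
    _ = η_ X X' ▷ Y ≫ (α_ X X' Y).hom := by
        rw [braiding_tensorUnit_left, braiding_tensorUnit_right]
        simp

/-- Transparency passes to right duals. -/
theorem transparent_dual (X X' : D) [ExactPairing X X']
    (h : ∀ Y : D, (β_ X Y).symm = β_ Y X) (Y : D) :
    (β_ X' Y).symm = β_ Y X' := by
  have h' : ∀ Y : D, (β_ X Y).inv = (β_ Y X).hom := fun Y => by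
    rw [← Iso.symm_hom, h Y]
  have hc := transparent_dual_comp X X' h' Y
  ext
  rw [Iso.symm_hom, ← Category.comp_id (β_ X' Y).inv, ← hc, Iso.inv_hom_id_assoc]

/-- Transparency passes to left duals. -/
theorem transparent_dual' (X X' : D) [ExactPairing X' X]
    (h : ∀ Y : D, (β_ X Y).symm = β_ Y X) (Y : D) :
    (β_ X' Y).symm = β_ Y X' := by
  haveI : ExactPairing X X' := exactPairing_swap X' X
  exact transparent_dual X X' h Y

end Aux

/-- If `X` is a symmetric object of the Drinfeld centre of a rigid monoidal category, then
any left dual `∗X` of `X` in `Z(C)` is symmetric, and likewise any right dual.  Consequently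
(assuming `Z(C)` is rigid, as it is when `C` is rigid) every symmetric object admits symmetric
left and right duals, so the full subcategory of symmetric objects of `Z(C)` is rigid. -/
theorem symmetric_closed_under_duals [RigidCategory C] :
    (∀ (X X' : Center C), ExactPairing X X' → IsSymmetricObj X → IsSymmetricObj X') ∧
    (∀ (X X' : Center C), ExactPairing X' X → IsSymmetricObj X → IsSymmetricObj X') ∧
    (RigidCategory (Center C) →
      ∀ X : Center C, IsSymmetricObj X →
        (∃ X' : Center C, IsSymmetricObj X' ∧ Nonempty (ExactPairing X X')) ∧
        (∃ X' : Center C, IsSymmetricObj X' ∧ Nonempty (ExactPairing X' X))) := by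
  refine ⟨fun X X' p h => ?_, fun X X' p h => ?_, fun _ X h => ?_⟩
  · exact transparent_dual X X' h
  · exact transparent_dual' X X' h
  · exact ⟨⟨Xᘁ, transparent_dual X (Xᘁ) h, ⟨inferInstance⟩⟩,
      ⟨ᘁX, transparent_dual' X (ᘁX) h, ⟨inferInstance⟩⟩⟩
end
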